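/- arXiv:1807.10902 — 2 statements merged into one kernel-verified Lean document; each statement's English description precedes it below -/
import Mathlib

section
/- (Prediction-loss bound for the lasso.) Let R_n, R̄ : ℝ^p → ℝ, λ ≥ 0, λ₀ ≥ 0, θ* ∈ ℝ^p, and define L(θ) = R̄(θ) − R̄(θ*) and G(θ) = R_n(θ) − R̄(θ). Suppose θ̂ ∈ ℝ^p satisfies R_n(θ̂) + λ‖θ̂‖₁ ≤ R_n(θ*) + λ‖θ*‖₁, that the increment bound |G(θ̂) − G(θ*)| ≤ λ₀ holds, and that λ₀ ≤ λ‖θ*‖₁. Then L(θ̂) + λ‖θ̂‖₁ ≤ 2λ‖θ*‖₁. -/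
/-- Prediction-loss bound for the lasso: under the basic inequality, the increment bound
`|G(θ̂) - G(θ*)| ≤ λ₀` and `λ₀ ≤ λ‖θ*‖₁`, the prediction loss plus penalty is at most
`2λ‖θ*‖₁`. -/
theorem prediction_loss_bound (p : ℕ) (Rn Rbar : (Fin p → ℝ) → ℝ) (lam lam0 : ℝ)
    (hlam : 0 ≤ lam) (hlam0 : 0 ≤ lam0) (θstar θhat : Fin p → ℝ)
    (hmin : Rn θhat + lam * ∑ j, |θhat j| ≤ Rn θstar + lam * ∑ j, |θstar j|)
    (hG : |(Rn θhat - Rbar θhat) - (Rn θstar - Rbar θstar)| ≤ lam0)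
    (hl : lam0 ≤ lam * ∑ j, |θstar j|) :
    (Rbar θhat - Rbar θstar) + lam * ∑ j, |θhat j| ≤ 2 * lam * ∑ j, |θstar j| := by
  have := abs_le.mp hG
  linarith [this.1, this.2]
end

section
/- (Cone condition for the lasso error.) Let R_n, R̄ : ℝ^p → ℝ with R̄(θ) ≥ R̄(θ*) for all θ (θ* minimizes R̄), let λ > 0, λ₀ ≥ 0, and let S₀ ⊆ {1,…,p} be such that θ*_j = 0 for all j ∉ S₀. Suppose θ̂ satisfies R_n(θ̂) + λ‖θ̂‖₁ ≤ R_n(θ*) + λ‖θ*‖₁ and that |(R_n(θ̂) − R̄(θ̂)) − (R_n(θ*) − R̄(θ*))| ≤ λ₀. Then, writing δ = θ̂ − θ*, the error satisfies ‖δ_{S₀ᶜ}‖₁ ≤ ‖δ_{S₀}‖₁ + λ₀/λ; in particular, if λ₀ = 0 then ‖δ_{S₀ᶜ}‖₁ ≤ ‖δ_{S₀}‖₁, i.e. δ lies in the cone C₁. -/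
/-- Cone condition for the lasso error: writing `δ = θ̂ - θ*`, the error satisfies
`‖δ_{S₀ᶜ}‖₁ ≤ ‖δ_{S₀}‖₁ + λ₀/λ`; in particular if `λ₀ = 0` then `δ` lies in the cone `C₁`. -/
theorem cone_condition (p : ℕ) (Rn Rbar : (Fin p → ℝ) → ℝ) (θstar : Fin p → ℝ)
    (hstar : ∀ θ, Rbar θstar ≤ Rbar θ) (lam lam0 : ℝ) (hlam : 0 < lam) (hlam0 : 0 ≤ lam0)
    (S0 : Finset (Fin p)) (hsupp : ∀ j ∉ S0, θstar j = 0) (θhat : Fin p → ℝ)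
    (hmin : Rn θhat + lam * ∑ j, |θhat j| ≤ Rn θstar + lam * ∑ j, |θstar j|)
    (hG : |(Rn θhat - Rbar θhat) - (Rn θstar - Rbar θstar)| ≤ lam0) :
    (∑ j ∈ S0ᶜ, |θhat j - θstar j| ≤ (∑ j ∈ S0, |θhat j - θstar j|) + lam0 / lam) ∧
    (lam0 = 0 → ∑ j ∈ S0ᶜ, |θhat j - θstar j| ≤ ∑ j ∈ S0, |θhat j - θstar j|) := by
  have hG' := abs_le.1 hG
  have hRbar := hstar θhat
  have h1 : lam * ∑ j, |θhat j| ≤ lam * ∑ j, |θstar j| + lam0 := by linarith [hG'.1]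
  have hsplit1 : ∑ j, |θhat j| = ∑ j ∈ S0, |θhat j| + ∑ j ∈ S0ᶜ, |θhat j| :=
    (Finset.sum_add_sum_compl S0 _).symm
  have hsplit2 : ∑ j, |θstar j| = ∑ j ∈ S0, |θstar j| + ∑ j ∈ S0ᶜ, |θstar j| :=
    (Finset.sum_add_sum_compl S0 _).symm
  have hzero : ∑ j ∈ S0ᶜ, |θstar j| = 0 := by
    apply Finset.sum_eq_zero
    intro j hj
    rw [hsupp j (Finset.mem_compl.1 hj), abs_zero]
  have hceq : ∑ j ∈ S0ᶜ, |θhat j| = ∑ j ∈ S0ᶜ, |θhat j - θstar j| := by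
    apply Finset.sum_congr rfl
    intro j hj
    rw [hsupp j (Finset.mem_compl.1 hj), sub_zero]
  have htri : ∑ j ∈ S0, |θstar j| ≤ ∑ j ∈ S0, |θhat j - θstar j| + ∑ j ∈ S0, |θhat j| := by
    rw [← Finset.sum_add_distrib]
    apply Finset.sum_le_sum
    intro j _
    have := abs_sub_abs_le_abs_sub (θstar j) (θhat j)
    rw [abs_sub_comm] at this
    linarith [abs_nonneg (θhat j)]
  have key : lam * ∑ j ∈ S0ᶜ, |θhat j - θstar j| ≤
      lam * ∑ j ∈ S0, |θhat j - θstar j| + lam0 := by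
    rw [hsplit1, hsplit2, hzero, hceq] at h1
    nlinarith [hlam.le]
  have hl : lam0 / lam * lam = lam0 := div_mul_cancel₀ _ hlam.ne'
  have hmain : ∑ j ∈ S0ᶜ, |θhat j - θstar j| ≤
      (∑ j ∈ S0, |θhat j - θstar j|) + lam0 / lam := by
    nlinarith [key, hlam]
  exact ⟨hmain, fun h0 => by simpa [h0] using hmain⟩
end
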